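/- Let X be a real Banach space and D ⊆ X a bounded, closed, convex set containing at least two points. Then a point c ∈ X is a center of D if and only if c is a center of D^c; that is, D and D^c have the same set of centers. -/

import Mathlib

open Metric Set Bornology

variable {X : Type*}

/-- `frad A x` is r(A,x) = sup of distances from x to points of A. -/
noncomputable def frad [NormedAddCommGroup X] (A : Set X) (x : X) : ℝ :=
  sSup ((fun a => dist x a) '' A)

/-- `rad A` is the (Chebyshev) radius r(A) = inf over x in the space of r(A,x). -/
noncomputable def rad [NormedAddCommGroup X] (A : Set X) : ℝ :=
  sInf (Set.range fun x => frad A x)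

/-- `selfRad A` is the self-radius r(A,A) = inf over x ∈ A of r(A,x). -/
noncomputable def selfRad [NormedAddCommGroup X] (A : Set X) : ℝ :=
  sInf ((fun x => frad A x) '' A)

/-- The ball intersection D' of D. -/
noncomputable def ballInt [NormedAddCommGroup X] (D : Set X) : Set X :=
  ⋂ x ∈ D, closedBall x (Metric.diam D)

/-- The ball hull D^c of D. -/
noncomputable def ballHull [NormedAddCommGroup X] (D : Set X) : Set X :=
  ⋂ x ∈ {y : X | D ⊆ closedBall y (Metric.diam D)}, closedBall x (Metric.diam D)

/-- A set is diametrically maximal (complete) if adjoining any outside point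
increases the diameter. -/
def IsDM [NormedAddCommGroup X] (C : Set X) : Prop :=
  ∀ x ∉ C, Metric.diam C < Metric.diam (insert x C)

/-- `C` is a completion of `D`: a diametrically maximal set containing `D`
with the same diameter. -/
def IsCompletion [NormedAddCommGroup X] (D C : Set X) : Prop :=
  IsDM C ∧ D ⊆ C ∧ Metric.diam C = Metric.diam D

section Aux

variable [NormedAddCommGroup X] [NormedSpace ℝ X]

lemma bddAbove_dist_image {D : Set X} (hb : IsBounded D) (x : X) :
    BddAbove ((fun a => dist x a) '' D) := by
  obtain ⟨R, hR⟩ := hb.subset_closedBall x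
  exact ⟨R, by rintro _ ⟨a, ha, rfl⟩; simpa [dist_comm] using hR ha⟩

lemma le_frad {D : Set X} (hb : IsBounded D) {x a : X} (ha : a ∈ D) :
    dist x a ≤ frad D x := le_csSup (bddAbove_dist_image hb x) ⟨a, ha, rfl⟩

lemma frad_le {D : Set X} (hne : D.Nonempty) {x : X} {r : ℝ}
    (h : ∀ a ∈ D, dist x a ≤ r) : frad D x ≤ r :=
  csSup_le (hne.image _) (by rintro _ ⟨a, ha, rfl⟩; exact h a ha)

lemma frad_nonneg {D : Set X} (hb : IsBounded D) (hne : D.Nonempty) (x : X) :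
    0 ≤ frad D x :=
  le_trans dist_nonneg (le_frad hb hne.choose_spec)

lemma rad_le_frad {D : Set X} (hb : IsBounded D) (hne : D.Nonempty) (x : X) :
    rad D ≤ frad D x :=
  csInf_le ⟨0, by rintro _ ⟨y, rfl⟩; exact frad_nonneg hb hne y⟩ ⟨x, rfl⟩

lemma subset_ballHull (D : Set X) : D ⊆ ballHull D := fun p hp =>
  Set.mem_iInter₂.2 fun _ hy => hy hp

/-- Key lemma: if `D ⊆ B(x,r)` with `r ≤ diam D`, then `ballHull D ⊆ B(x,r)`. -/
lemma ballHull_subset_closedBall {D : Set X} (hne : D.Nonempty) {x : X} {r : ℝ}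
    (hrd : r ≤ Metric.diam D) (hDx : D ⊆ closedBall x r) :
    ballHull D ⊆ closedBall x r := by
  intro p hp
  rcases eq_or_ne p x with rfl | hpx
  · obtain ⟨a, ha⟩ := hne
    have : (0:ℝ) ≤ r := le_trans dist_nonneg (mem_closedBall.1 (hDx ha))
    simpa using this
  · set d := Metric.diam D with hd
    set t : ℝ := (d - r) * ‖p - x‖⁻¹ with ht
    have hnz : ‖p - x‖ ≠ 0 := by
      simpa [sub_eq_zero] using hpx
    have hnpos : 0 < ‖p - x‖ := lt_of_le_of_ne (norm_nonneg _) (Ne.symm hnz)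
    have ht0 : 0 ≤ t := mul_nonneg (by linarith) (inv_nonneg.2 (norm_nonneg _))
    have h3 : t * ‖p - x‖ = d - r := by
      rw [ht, mul_assoc, inv_mul_cancel₀ hnz, mul_one]
    set y := x - t • (p - x) with hy
    have hyI : D ⊆ closedBall y d := by
      intro a ha
      have h1 : dist a x ≤ r := mem_closedBall.1 (hDx ha)
      have h2 : dist x y = t * ‖p - x‖ := by
        simp [hy, dist_eq_norm, norm_smul, abs_of_nonneg ht0]
      have : dist a y ≤ r + (d - r) := by
        calc dist a y ≤ dist a x + dist x y := dist_triangle _ _ _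
          _ ≤ r + (d - r) := by rw [h2, h3]; linarith
      simpa [mem_closedBall] using this.trans_eq (by ring)
    have hpy : dist p y ≤ d := mem_closedBall.1 (Set.mem_iInter₂.1 hp y hyI)
    have hpy' : p - y = (1 + t) • (p - x) := by
      rw [hy]; module
    have hdist : dist p y = ‖p - x‖ + (d - r) := by
      rw [dist_eq_norm, hpy', norm_smul, Real.norm_eq_abs,
        abs_of_nonneg (by linarith : (0:ℝ) ≤ 1 + t), add_mul, one_mul, h3]
    have : ‖p - x‖ ≤ r := by
      rw [hdist] at hpy; linarith
    simpa [mem_closedBall, dist_eq_norm] using this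

end Aux

/-- D and D^c have the same centers. -/
theorem stmt15 [NormedAddCommGroup X] [NormedSpace ℝ X] [CompleteSpace X]
    (D : Set X) (hDb : IsBounded D) (hDcl : IsClosed D) (hDcv : Convex ℝ D)
    (hDnt : D.Nontrivial) :
    ∀ c : X, frad D c = rad D ↔ frad (ballHull D) c = rad (ballHull D) := by
  classical
  obtain ⟨a₀, ha₀⟩ := hDnt.nonempty
  set d := Metric.diam D with hd
  have hd0 : 0 ≤ d := diam_nonneg
  have hDH : D ⊆ ballHull D := subset_ballHull D
  have hDne : D.Nonempty := ⟨a₀, ha₀⟩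
  have haI : D ⊆ closedBall a₀ d := fun b hb =>
    mem_closedBall.2 (dist_le_diam_of_mem hDb hb ha₀)
  have hHsub : ballHull D ⊆ closedBall a₀ d := fun p hp =>
    Set.mem_iInter₂.1 hp a₀ haI
  have hHb : IsBounded (ballHull D) := (isBounded_closedBall).subset hHsub
  have hHne : (ballHull D).Nonempty := ⟨a₀, hDH ha₀⟩
  have hfradle : ∀ x : X, frad D x ≤ frad (ballHull D) x := fun x =>
    csSup_le_csSup (bddAbove_dist_image hHb x) (hDne.image _)
      (Set.image_mono hDH)
  have hfradHa₀ : frad (ballHull D) a₀ ≤ d :=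
    frad_le hHne fun p hp => by
      have := mem_closedBall.1 (hHsub hp); rwa [dist_comm] at this
  have hkey : ∀ x : X, frad D x ≤ d → frad (ballHull D) x ≤ frad D x := by
    intro x hx
    refine frad_le hHne fun p hp => ?_
    have hsub : D ⊆ closedBall x (frad D x) := fun a ha => by
      have := le_frad hDb ha (x := x)
      simpa [mem_closedBall, dist_comm] using this
    have := mem_closedBall.1 (ballHull_subset_closedBall hDne hx hsub hp)
    rwa [dist_comm] at this
  -- rad (ballHull D) ≤ frad D x for every x
  have hradH_le : ∀ x : X, rad (ballHull D) ≤ frad D x := by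
    intro x
    rcases le_or_gt (frad D x) d with hle | hlt
    · exact (rad_le_frad hHb hHne x).trans (hkey x hle)
    · exact ((rad_le_frad hHb hHne a₀).trans hfradHa₀).trans hlt.le
  have h1 : rad (ballHull D) ≤ rad D :=
    le_csInf (Set.range_nonempty _) (by rintro _ ⟨x, rfl⟩; exact hradH_le x)
  have h2 : rad D ≤ rad (ballHull D) :=
    le_csInf (Set.range_nonempty _)
      (by rintro _ ⟨x, rfl⟩; exact (rad_le_frad hDb hDne x).trans (hfradle x))
  have hradeq : rad D = rad (ballHull D) := le_antisymm h2 h1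
  have hradD_le_d : rad D ≤ d :=
    (rad_le_frad hDb hDne a₀).trans (frad_le hDne fun b hb =>
      dist_le_diam_of_mem hDb ha₀ hb)
  intro c
  constructor
  · intro h
    have hc : frad (ballHull D) c ≤ rad D := h ▸ hkey c (h ▸ hradD_le_d)
    have h5 := rad_le_frad hHb hHne c
    linarith
  · intro h
    have : frad D c ≤ rad D := hradeq ▸ (hfradle c).trans_eq h
    exact le_antisymm this (rad_le_frad hDb hDne c)
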